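/- Let X, Y, W, C, D be random variables taking values in finite sets. If H(D | (C, X)) = 0 or H(D | (C, Y)) = 0 (i.e., D is almost surely a function of (C,X), or of (C,Y)), then I(X; Y | (C, D, W)) ≤ I(X; Y | (C, W)). (Informally: appending a public message computed by either party from its own data and the past transcript cannot increase the conditional mutual information between the two parties' data.) -/

import Mathlib

open scoped BigOperators Classical

noncomputable section

namespace OT

variable {Ω : Type*} [Fintype Ω]

/-- Probability of an event under a pmf on a finite sample space. -/
def pr (μ : Ω → ℝ) (s : Set Ω) : ℝ := ∑ ω, s.indicator μ ω

/-- `q` is a probability mass function on a finite type. -/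
def isDist {α : Type*} [Fintype α] (q : α → ℝ) : Prop := (∀ a, 0 ≤ q a) ∧ ∑ a, q a = 1

/-- Distribution (pmf) of a random variable. -/
def dst {α : Type*} (μ : Ω → ℝ) (X : Ω → α) : α → ℝ := fun a => pr μ {ω | X ω = a}

/-- Joint distribution of two random variables. -/
def jd {α β : Type*} (μ : Ω → ℝ) (X : Ω → α) (Y : Ω → β) : α × β → ℝ :=
  fun q => pr μ {ω | X ω = q.1 ∧ Y ω = q.2}

/-- Conditional pmf given an event. -/
def cnd (μ : Ω → ℝ) (s : Set Ω) : Ω → ℝ := fun ω => s.indicator μ ω / pr μ s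

/-- Shannon entropy (in bits) of a pmf on a finite type. -/
def entD {α : Type*} [Fintype α] (q : α → ℝ) : ℝ := ∑ a, -(q a * Real.logb 2 (q a))

/-- Shannon entropy (in bits) of a random variable. -/
def ent {α : Type*} [Fintype α] (μ : Ω → ℝ) (X : Ω → α) : ℝ := entD (dst μ X)

/-- Conditional Shannon entropy `H(X|Y)` (in bits). -/
def condEnt {α β : Type*} [Fintype α] [Fintype β] (μ : Ω → ℝ) (X : Ω → α) (Y : Ω → β) : ℝ :=
  ent μ (fun ω => (X ω, Y ω)) - ent μ Y

/-- Mutual information `I(X;Y)` (in bits). -/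
def mi {α β : Type*} [Fintype α] [Fintype β] (μ : Ω → ℝ) (X : Ω → α) (Y : Ω → β) : ℝ :=
  ent μ X + ent μ Y - ent μ (fun ω => (X ω, Y ω))

/-- Conditional mutual information `I(X;Y|Z)` (in bits). -/
def cmi {α β γ : Type*} [Fintype α] [Fintype β] [Fintype γ]
    (μ : Ω → ℝ) (X : Ω → α) (Y : Ω → β) (Z : Ω → γ) : ℝ :=
  ent μ (fun ω => (X ω, Z ω)) + ent μ (fun ω => (Y ω, Z ω))
    - ent μ (fun ω => (X ω, Y ω, Z ω)) - ent μ Z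

/-- Rényi entropy of order two (in bits). -/
def ren2 {α : Type*} [Fintype α] (μ : Ω → ℝ) (X : Ω → α) : ℝ :=
  Real.logb 2 (1 / ∑ a, (dst μ X a) ^ 2)

/-- Statistical (total variation) distance between two pmfs. -/
def sd {α : Type*} [Fintype α] (q q' : α → ℝ) : ℝ := (∑ a, |q a - q' a|) / 2

/-- Conditional min-entropy `H∞(X|Y)` of a joint pmf (in bits):
the minimum over `(a,b)` in the support of `log₂ (P(Y=b) / P(X=a, Y=b))`. -/
def minEnt {α β : Type*} [Fintype α] [Fintype β] (q : α × β → ℝ) : ℝ :=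
  sInf {r | ∃ a b, 0 < q (a, b) ∧ r = Real.logb 2 ((∑ a', q (a', b)) / q (a, b))}

/-- `ε`-smooth conditional min-entropy of a joint pmf (in bits). -/
def sminEnt {α β : Type*} [Fintype α] [Fintype β] (q : α × β → ℝ) (ε : ℝ) : ℝ :=
  sSup {r | ∃ q' : α × β → ℝ, isDist q' ∧ sd q q' ≤ ε ∧ r = minEnt q'}

/-- Conditional zero-entropy `H₀(X|Y)` of a joint pmf (in bits). -/
def zeroEnt {α β : Type*} [Fintype α] [Fintype β] (q : α × β → ℝ) : ℝ :=
  sSup {r | ∃ b, 0 < ∑ a, q (a, b) ∧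
    r = Real.logb 2 ((Finset.univ.filter fun a => 0 < q (a, b)).card)}

end OT

open OT

set_option linter.unusedSectionVars false
set_option maxHeartbeats 1000000

section Helpers
variable {Ω : Type*} [Fintype Ω] {α β γ : Type*} [Fintype α] [Fintype β] [Fintype γ]

lemma dst_apply (μ : Ω → ℝ) (X : Ω → α) (a : α) :
    dst μ X a = ∑ ω, if X ω = a then μ ω else 0 := by
  simp [dst, pr, Set.indicator_apply, Set.mem_setOf_eq]

lemma dst_nonneg {μ : Ω → ℝ} (hμ : ∀ ω, 0 ≤ μ ω) (X : Ω → α) (a : α) : 0 ≤ dst μ X a := by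
  rw [dst_apply]
  refine Finset.sum_nonneg fun ω _ => ?_
  split
  · exact hμ ω
  · exact le_rfl

lemma sum_dst {μ : Ω → ℝ} (hμ : isDist μ) (X : Ω → α) : ∑ a, dst μ X a = 1 := by
  simp only [dst_apply]
  rw [Finset.sum_comm]
  simp [Finset.sum_ite_eq, hμ.2]

lemma dst_comp_inj {μ : Ω → ℝ} {f : α → β} (hf : Function.Injective f) (U : Ω → α) (a : α) :
    dst μ (fun ω => f (U ω)) (f a) = dst μ U a := by
  simp only [dst_apply, hf.eq_iff]

lemma dst_comp_notmem {μ : Ω → ℝ} {f : α → β} (U : Ω → α) {b : β} (hb : ∀ a, f a ≠ b) :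
    dst μ (fun ω => f (U ω)) b = 0 := by
  simp only [dst_apply]
  exact Finset.sum_eq_zero fun ω _ => by simp [hb (U ω)]

lemma ent_comp_inj (μ : Ω → ℝ) {f : α → β} (hf : Function.Injective f) (U : Ω → α) :
    ent μ (fun ω => f (U ω)) = ent μ U := by
  unfold ent entD
  have h1 : ∑ b : β, -(dst μ (fun ω => f (U ω)) b * Real.logb 2 (dst μ (fun ω => f (U ω)) b))
      = ∑ b ∈ Finset.univ.image f,
          -(dst μ (fun ω => f (U ω)) b * Real.logb 2 (dst μ (fun ω => f (U ω)) b)) := by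
    refine (Finset.sum_subset (Finset.subset_univ _) ?_).symm
    intro b _ hb
    rw [dst_comp_notmem U fun a h => hb (Finset.mem_image.2 ⟨a, Finset.mem_univ a, h⟩)]
    simp
  rw [h1, Finset.sum_image (fun a _ b _ h => hf h)]
  exact Finset.sum_congr rfl fun a _ => by rw [dst_comp_inj hf]

lemma marg_snd (μ : Ω → ℝ) (U : Ω → α) (V : Ω → β) (v : β) :
    ∑ u, dst μ (fun ω => (U ω, V ω)) (u, v) = dst μ V v := by
  simp only [dst_apply]
  rw [Finset.sum_comm]
  refine Finset.sum_congr rfl fun ω _ => ?_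
  by_cases h : V ω = v <;> simp [Prod.ext_iff, h, Finset.sum_ite_eq]

lemma marg_mid (μ : Ω → ℝ) (U : Ω → α) (V : Ω → β) (S : Ω → γ) (a : α) (c : γ) :
    ∑ b, dst μ (fun ω => (U ω, V ω, S ω)) (a, b, c) = dst μ (fun ω => (U ω, S ω)) (a, c) := by
  simp only [dst_apply]
  rw [Finset.sum_comm]
  refine Finset.sum_congr rfl fun ω _ => ?_
  by_cases h1 : U ω = a <;> by_cases h2 : S ω = c <;>
    simp [Prod.ext_iff, h1, h2, Finset.sum_ite_eq]

lemma marg_fst3 (μ : Ω → ℝ) (U : Ω → α) (V : Ω → β) (S : Ω → γ) (b : β) (c : γ) :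
    ∑ a, dst μ (fun ω => (U ω, V ω, S ω)) (a, b, c) = dst μ (fun ω => (V ω, S ω)) (b, c) := by
  simp only [dst_apply]
  rw [Finset.sum_comm]
  refine Finset.sum_congr rfl fun ω _ => ?_
  by_cases h1 : V ω = b <;> by_cases h2 : S ω = c <;>
    simp [Prod.ext_iff, h1, h2, Finset.sum_ite_eq]

lemma neg_mul_logb_sum_le (f : α → ℝ) (hf : ∀ a, 0 ≤ f a) :
    -((∑ a, f a) * Real.logb 2 (∑ a, f a)) ≤ ∑ a, -(f a * Real.logb 2 (f a)) := by
  have hkey : -((∑ a, f a) * Real.logb 2 (∑ a', f a'))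
      = ∑ a, -(f a * Real.logb 2 (∑ a', f a')) := by
    rw [Finset.sum_mul, Finset.sum_neg_distrib]
  rw [hkey]
  refine Finset.sum_le_sum fun a _ => ?_
  rw [neg_le_neg_iff]
  rcases eq_or_lt_of_le (hf a) with h0 | h0
  · simp [← h0]
  · refine mul_le_mul_of_nonneg_left ?_ (hf a)
    exact Real.logb_le_logb_of_le (by norm_num) h0
      (Finset.single_le_sum (fun i _ => hf i) (Finset.mem_univ a))

lemma sum3_abc (f : α → β → γ → ℝ) :
    ∑ t : α × β × γ, f t.1 t.2.1 t.2.2 = ∑ a, ∑ b, ∑ c, f a b c := by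
  rw [Fintype.sum_prod_type]
  refine Finset.sum_congr rfl fun a _ => ?_
  rw [Fintype.sum_prod_type]

lemma sum3_acb (f : α → β → γ → ℝ) :
    ∑ t : α × β × γ, f t.1 t.2.1 t.2.2 = ∑ a, ∑ c, ∑ b, f a b c := by
  rw [sum3_abc]
  exact Finset.sum_congr rfl fun a _ => Finset.sum_comm

lemma sum3_bca (f : α → β → γ → ℝ) :
    ∑ t : α × β × γ, f t.1 t.2.1 t.2.2 = ∑ b, ∑ c, ∑ a, f a b c := by
  rw [sum3_abc, Finset.sum_comm]
  exact Finset.sum_congr rfl fun b _ => Finset.sum_comm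

lemma sum3_cab (f : α → β → γ → ℝ) :
    ∑ t : α × β × γ, f t.1 t.2.1 t.2.2 = ∑ c, ∑ a, ∑ b, f a b c := by
  rw [sum3_acb, Finset.sum_comm]

lemma collapse_neg_mul (s : Finset α) (g : α → ℝ) (L : ℝ) :
    -((∑ i ∈ s, g i) * L) = ∑ i ∈ s, -(g i * L) := by
  rw [Finset.sum_neg_distrib, Finset.sum_mul]

lemma submod_pmf (p : α × β × γ → ℝ) (hp : ∀ t, 0 ≤ p t) (hs : ∑ t, p t = 1) :
    entD p + entD (fun c => ∑ a, ∑ b, p (a, b, c))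
      ≤ entD (fun ac : α × γ => ∑ b, p (ac.1, b, ac.2))
        + entD (fun bc : β × γ => ∑ a, p (a, bc.1, bc.2)) := by
  set mA : α → γ → ℝ := fun a c => ∑ b, p (a, b, c) with hmA
  set mB : β → γ → ℝ := fun b c => ∑ a, p (a, b, c) with hmB
  set mC : γ → ℝ := fun c => ∑ a, ∑ b, p (a, b, c) with hmC
  have hmA0 : ∀ a c, 0 ≤ mA a c := fun a c =>
    Finset.sum_nonneg fun b _ => hp (a, b, c)
  have hmB0 : ∀ b c, 0 ≤ mB b c := fun b c =>
    Finset.sum_nonneg fun a _ => hp (a, b, c)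
  have hmC0 : ∀ c, 0 ≤ mC c := fun c =>
    Finset.sum_nonneg fun a _ => Finset.sum_nonneg fun b _ => hp (a, b, c)
  have hpA : ∀ a b c, p (a, b, c) ≤ mA a c := fun a b c =>
    Finset.single_le_sum (fun b' _ => hp (a, b', c)) (Finset.mem_univ b)
  have hpB : ∀ a b c, p (a, b, c) ≤ mB b c := fun a b c =>
    Finset.single_le_sum (fun a' _ => hp (a', b, c)) (Finset.mem_univ a)
  have hAC : ∀ a c, mA a c ≤ mC c := fun a c =>
    Finset.single_le_sum (fun a' _ => Finset.sum_nonneg fun b _ => hp (a', b, c))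
      (Finset.mem_univ a)
  have hpC : ∀ a b c, p (a, b, c) ≤ mC c := fun a b c => (hpA a b c).trans (hAC a c)
  have E0 : entD p = ∑ t : α × β × γ, -(p t * Real.logb 2 (p t)) := by
    unfold entD; rfl
  have E1 : entD (fun ac : α × γ => ∑ b, p (ac.1, b, ac.2))
      = ∑ t : α × β × γ, -(p t * Real.logb 2 (mA t.1 t.2.2)) := by
    rw [show (∑ t : α × β × γ, -(p t * Real.logb 2 (mA t.1 t.2.2)))
        = ∑ a, ∑ c, ∑ b, -(p (a, b, c) * Real.logb 2 (mA a c))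
        from sum3_acb (fun a b c => -(p (a, b, c) * Real.logb 2 (mA a c)))]
    unfold entD
    rw [Fintype.sum_prod_type]
    exact Finset.sum_congr rfl fun a _ => Finset.sum_congr rfl fun c _ =>
      collapse_neg_mul _ _ _
  have E2 : entD (fun bc : β × γ => ∑ a, p (a, bc.1, bc.2))
      = ∑ t : α × β × γ, -(p t * Real.logb 2 (mB t.2.1 t.2.2)) := by
    rw [show (∑ t : α × β × γ, -(p t * Real.logb 2 (mB t.2.1 t.2.2)))
        = ∑ b, ∑ c, ∑ a, -(p (a, b, c) * Real.logb 2 (mB b c))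
        from sum3_bca (fun a b c => -(p (a, b, c) * Real.logb 2 (mB b c)))]
    unfold entD
    rw [Fintype.sum_prod_type]
    exact Finset.sum_congr rfl fun b _ => Finset.sum_congr rfl fun c _ =>
      collapse_neg_mul _ _ _
  have E3 : entD mC = ∑ t : α × β × γ, -(p t * Real.logb 2 (mC t.2.2)) := by
    rw [show (∑ t : α × β × γ, -(p t * Real.logb 2 (mC t.2.2)))
        = ∑ c, ∑ a, ∑ b, -(p (a, b, c) * Real.logb 2 (mC c))
        from sum3_cab (fun a b c => -(p (a, b, c) * Real.logb 2 (mC c)))]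
    unfold entD
    refine Finset.sum_congr rfl fun c _ => ?_
    rw [collapse_neg_mul]
    exact Finset.sum_congr rfl fun a _ => collapse_neg_mul _ _ _
  have hlog2 : (0:ℝ) < Real.log 2 := Real.log_pos (by norm_num)
  have key : ∀ t : α × β × γ,
      (p t - mA t.1 t.2.2 * mB t.2.1 t.2.2 / mC t.2.2) / Real.log 2
        ≤ (-(p t * Real.logb 2 (mA t.1 t.2.2)) + -(p t * Real.logb 2 (mB t.2.1 t.2.2)))
          - (-(p t * Real.logb 2 (p t)) + -(p t * Real.logb 2 (mC t.2.2))) := by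
    rintro ⟨a, b, c⟩
    simp only
    rcases eq_or_lt_of_le (hp (a, b, c)) with h0 | h0
    · rw [← h0]
      have : 0 ≤ mA a c * mB b c / mC c :=
        div_nonneg (mul_nonneg (hmA0 a c) (hmB0 b c)) (hmC0 c)
      simp only [zero_mul, neg_zero, zero_sub, zero_add, add_zero, neg_mul]
      rw [div_le_iff₀ hlog2]
      nlinarith
    · have hA : 0 < mA a c := lt_of_lt_of_le h0 (hpA a b c)
      have hB : 0 < mB b c := lt_of_lt_of_le h0 (hpB a b c)
      have hC : 0 < mC c := lt_of_lt_of_le h0 (hpC a b c)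
      set q := p (a, b, c) with hq
      have hr : 0 < mA a c * mB b c / (q * mC c) := by positivity
      have hlog : Real.log (mA a c * mB b c / (q * mC c))
          ≤ mA a c * mB b c / (q * mC c) - 1 := Real.log_le_sub_one_of_pos hr
      have hexp : Real.log (mA a c * mB b c / (q * mC c))
          = Real.log (mA a c) + Real.log (mB b c) - Real.log q - Real.log (mC c) := by
        rw [Real.log_div (by positivity) (by positivity), Real.log_mul hA.ne' hB.ne',
          Real.log_mul h0.ne' hC.ne']
        ring
      have hrq : q * (mA a c * mB b c / (q * mC c)) = mA a c * mB b c / mC c := by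
        field_simp
      have h2 : q * Real.log (mA a c * mB b c / (q * mC c))
          ≤ mA a c * mB b c / mC c - q := by
        calc q * Real.log (mA a c * mB b c / (q * mC c))
            ≤ q * (mA a c * mB b c / (q * mC c) - 1) :=
              mul_le_mul_of_nonneg_left hlog h0.le
          _ = mA a c * mB b c / mC c - q := by rw [mul_sub, hrq]; ring
      rw [hexp] at h2
      calc (q - mA a c * mB b c / mC c) / Real.log 2
          ≤ (q * (Real.log q + Real.log (mC c) - Real.log (mA a c) - Real.log (mB b c)))
              / Real.log 2 := by
            refine (div_le_div_iff_of_pos_right hlog2).mpr ?_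
            nlinarith [h2]
        _ = -(q * Real.logb 2 (mA a c)) + -(q * Real.logb 2 (mB b c))
            - (-(q * Real.logb 2 q) + -(q * Real.logb 2 (mC c))) := by
            simp only [Real.logb]
            ring
  have hSle : ∑ t : α × β × γ, mA t.1 t.2.2 * mB t.2.1 t.2.2 / mC t.2.2 ≤ 1 := by
    rw [show (∑ t : α × β × γ, mA t.1 t.2.2 * mB t.2.1 t.2.2 / mC t.2.2)
        = ∑ c, ∑ a, ∑ b, mA a c * mB b c / mC c
        from sum3_cab (fun a b c => mA a c * mB b c / mC c)]
    have h1 : ∀ c, ∑ a, ∑ b, mA a c * mB b c / mC c ≤ mC c := by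
      intro c
      have : ∑ a, ∑ b, mA a c * mB b c / mC c = (∑ a, mA a c) * (∑ b, mB b c) / mC c := by
        rw [Finset.sum_mul_sum, Finset.sum_div]
        exact Finset.sum_congr rfl fun a _ => by rw [Finset.sum_div]
      rw [this]
      have hAA : ∑ a, mA a c = mC c := rfl
      have hBB : ∑ b, mB b c = mC c := Finset.sum_comm
      rw [hAA, hBB]
      rcases eq_or_lt_of_le (hmC0 c) with h | h
      · rw [← h]; simp
      · rw [mul_div_assoc, div_self h.ne', mul_one]
    calc ∑ c, ∑ a, ∑ b, mA a c * mB b c / mC c ≤ ∑ c, mC c :=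
          Finset.sum_le_sum fun c _ => h1 c
      _ = 1 := by
          rw [← hs, show (∑ t : α × β × γ, p t) = ∑ c, ∑ a, ∑ b, p (a, b, c)
            from sum3_cab (fun a b c => p (a, b, c))]
  have hsum : (1 - ∑ t : α × β × γ, mA t.1 t.2.2 * mB t.2.1 t.2.2 / mC t.2.2) / Real.log 2
      ≤ (entD (fun ac : α × γ => ∑ b, p (ac.1, b, ac.2))
          + entD (fun bc : β × γ => ∑ a, p (a, bc.1, bc.2)))
        - (entD p + entD mC) := by
    rw [E0, E1, E2, E3, ← Finset.sum_add_distrib, ← Finset.sum_add_distrib,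
      ← Finset.sum_sub_distrib, ← hs, ← Finset.sum_sub_distrib, Finset.sum_div]
    exact Finset.sum_le_sum fun t _ => key t
  have hfinal : 0 ≤ (1 - ∑ t : α × β × γ, mA t.1 t.2.2 * mB t.2.1 t.2.2 / mC t.2.2)
      / Real.log 2 := div_nonneg (by linarith) hlog2.le
  linarith

lemma entD_marg_le (p : α × β → ℝ) (hp : ∀ t, 0 ≤ p t) :
    entD (fun b => ∑ a, p (a, b)) ≤ entD p := by
  unfold entD
  rw [Fintype.sum_prod_type_right]
  exact Finset.sum_le_sum fun b _ =>
    neg_mul_logb_sum_le (fun a => p (a, b)) (fun a => hp (a, b))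

lemma ent_snd_le (μ : Ω → ℝ) (hμ : isDist μ) (U : Ω → α) (V : Ω → β) :
    ent μ V ≤ ent μ (fun ω => (U ω, V ω)) := by
  unfold ent
  rw [show dst μ V = fun v => ∑ u, dst μ (fun ω => (U ω, V ω)) (u, v) from
    funext fun v => (marg_snd μ U V v).symm]
  exact entD_marg_le _ (fun t => dst_nonneg hμ.1 _ _)

lemma condEnt_nonneg (μ : Ω → ℝ) (hμ : isDist μ) (U : Ω → α) (V : Ω → β) :
    0 ≤ condEnt μ U V := sub_nonneg.2 (ent_snd_le μ hμ U V)

lemma ent_submod (μ : Ω → ℝ) (hμ : isDist μ) (A' : Ω → α) (B' : Ω → β) (S' : Ω → γ) :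
    ent μ (fun ω => (A' ω, B' ω, S' ω)) + ent μ S'
      ≤ ent μ (fun ω => (A' ω, S' ω)) + ent μ (fun ω => (B' ω, S' ω)) := by
  have h := submod_pmf (dst μ (fun ω => (A' ω, B' ω, S' ω)))
    (fun t => dst_nonneg hμ.1 _ t) (sum_dst hμ _)
  unfold ent
  rw [show dst μ (fun ω => (A' ω, S' ω))
      = fun ac : α × γ => ∑ b, dst μ (fun ω => (A' ω, B' ω, S' ω)) (ac.1, b, ac.2) from
    funext fun ac => (marg_mid μ A' B' S' ac.1 ac.2).symm]
  rw [show dst μ (fun ω => (B' ω, S' ω))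
      = fun bc : β × γ => ∑ a, dst μ (fun ω => (A' ω, B' ω, S' ω)) (a, bc.1, bc.2) from
    funext fun bc => (marg_fst3 μ A' B' S' bc.1 bc.2).symm]
  rw [show dst μ S'
      = fun c => ∑ a, ∑ b, dst μ (fun ω => (A' ω, B' ω, S' ω)) (a, b, c) from
    funext fun c => by
      rw [show (∑ a, ∑ b, dst μ (fun ω => (A' ω, B' ω, S' ω)) (a, b, c))
          = ∑ a, dst μ (fun ω => (A' ω, S' ω)) (a, c) from
        Finset.sum_congr rfl fun a _ => marg_mid μ A' B' S' a c,
        marg_snd μ A' S' c]]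
  exact h

lemma condEnt_comp_le (μ : Ω → ℝ) (hμ : isDist μ) (Dv : Ω → β) (U : Ω → α) (g : α → γ) :
    condEnt μ Dv U ≤ condEnt μ Dv (fun ω => g (U ω)) := by
  have h := ent_submod μ hμ Dv U (fun ω => g (U ω))
  have e1 : ent μ (fun ω => (Dv ω, U ω, g (U ω))) = ent μ (fun ω => (Dv ω, U ω)) :=
    ent_comp_inj μ (f := fun du : β × α => (du.1, du.2, g du.2))
      (fun p q hpq => by
        simp only [Prod.mk.injEq] at hpq
        exact Prod.ext hpq.1 hpq.2.1) (fun ω => (Dv ω, U ω))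
  have e2 : ent μ (fun ω => (U ω, g (U ω))) = ent μ U :=
    ent_comp_inj μ (f := fun u : α => (u, g u))
      (fun p q hpq => by simpa using congrArg Prod.fst hpq) U
  have h' : ent μ (fun ω => (Dv ω, U ω, g (U ω))) + ent μ (fun ω => g (U ω))
      ≤ ent μ (fun ω => (Dv ω, g (U ω))) + ent μ (fun ω => (U ω, g (U ω))) := h
  rw [e1, e2] at h'
  have goal' : ent μ (fun ω => (Dv ω, U ω)) - ent μ U
      ≤ ent μ (fun ω => (Dv ω, g (U ω))) - ent μ (fun ω => g (U ω)) := by linarith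
  exact goal'

lemma cmi_comm (μ : Ω → ℝ) (X : Ω → α) (Y : Ω → β) (T : Ω → γ) :
    cmi μ X Y T = cmi μ Y X T := by
  unfold cmi
  have e : ent μ (fun ω => (Y ω, X ω, T ω)) = ent μ (fun ω => (X ω, Y ω, T ω)) :=
    ent_comp_inj μ (f := fun t : α × β × γ => (t.2.1, t.1, t.2.2))
      (fun p q hpq => by
        simp only [Prod.mk.injEq] at hpq
        exact Prod.ext hpq.2.1 (Prod.ext hpq.1 hpq.2.2)) (fun ω => (X ω, Y ω, T ω))
  rw [e]
  ring
end Helpers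

theorem statement8_aux {Ω A B C D E : Type*} [Fintype Ω] [Fintype A] [Fintype B] [Fintype C]
    [Fintype D] [Fintype E]
    (μ : Ω → ℝ) (hμ : isDist μ)
    (X : Ω → A) (Y : Ω → B) (W : Ω → C) (Cc : Ω → D) (Dd : Ω → E)
    (h : condEnt μ Dd (fun ω => (Cc ω, X ω)) = 0) :
    cmi μ X Y (fun ω => (Cc ω, Dd ω, W ω)) ≤ cmi μ X Y (fun ω => (Cc ω, W ω)) := by
  -- D is determined by (X, Cc, W)
  have hS1 : ent μ (fun ω => (Dd ω, X ω, Cc ω, W ω)) = ent μ (fun ω => (X ω, Cc ω, W ω)) := by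
    have h0 : condEnt μ Dd (fun ω => (X ω, Cc ω, W ω)) = 0 :=
      le_antisymm
        (le_trans
          (condEnt_comp_le μ hμ Dd (fun ω => (X ω, Cc ω, W ω))
            (fun t : A × D × C => (t.2.1, t.1)))
          (le_of_eq h))
        (condEnt_nonneg μ hμ Dd (fun ω => (X ω, Cc ω, W ω)))
    have h1 : ent μ (fun ω => (Dd ω, X ω, Cc ω, W ω)) - ent μ (fun ω => (X ω, Cc ω, W ω)) = 0 :=
      h0
    linarith
  -- D is determined by (X, Y, Cc, W)
  have hS2 : ent μ (fun ω => (Dd ω, X ω, Y ω, Cc ω, W ω))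
      = ent μ (fun ω => (X ω, Y ω, Cc ω, W ω)) := by
    have h0 : condEnt μ Dd (fun ω => (X ω, Y ω, Cc ω, W ω)) = 0 :=
      le_antisymm
        (le_trans
          (condEnt_comp_le μ hμ Dd (fun ω => (X ω, Y ω, Cc ω, W ω))
            (fun t : A × B × D × C => (t.2.2.1, t.1)))
          (le_of_eq h))
        (condEnt_nonneg μ hμ Dd (fun ω => (X ω, Y ω, Cc ω, W ω)))
    have h1 : ent μ (fun ω => (Dd ω, X ω, Y ω, Cc ω, W ω))
        - ent μ (fun ω => (X ω, Y ω, Cc ω, W ω)) = 0 := h0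
    linarith
  -- submodularity: conditioning on (Cc, W)
  have hS3 : ent μ (fun ω => (Dd ω, Y ω, Cc ω, W ω)) + ent μ (fun ω => (Cc ω, W ω))
      ≤ ent μ (fun ω => (Dd ω, Cc ω, W ω)) + ent μ (fun ω => (Y ω, Cc ω, W ω)) :=
    ent_submod μ hμ Dd Y (fun ω => (Cc ω, W ω))
  -- relabelings
  have t1 : ent μ (fun ω => (Dd ω, X ω, Cc ω, W ω))
      = ent μ (fun ω => (X ω, Cc ω, Dd ω, W ω)) :=
    ent_comp_inj μ (f := fun t : A × D × E × C => (t.2.2.1, t.1, t.2.1, t.2.2.2))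
      (fun p q hpq => by
        simp only [Prod.mk.injEq] at hpq
        exact Prod.ext hpq.2.1 (Prod.ext hpq.2.2.1 (Prod.ext hpq.1 hpq.2.2.2)))
      (fun ω => (X ω, Cc ω, Dd ω, W ω))
  have t2 : ent μ (fun ω => (Dd ω, Y ω, Cc ω, W ω))
      = ent μ (fun ω => (Y ω, Cc ω, Dd ω, W ω)) :=
    ent_comp_inj μ (f := fun t : B × D × E × C => (t.2.2.1, t.1, t.2.1, t.2.2.2))
      (fun p q hpq => by
        simp only [Prod.mk.injEq] at hpq
        exact Prod.ext hpq.2.1 (Prod.ext hpq.2.2.1 (Prod.ext hpq.1 hpq.2.2.2)))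
      (fun ω => (Y ω, Cc ω, Dd ω, W ω))
  have t3 : ent μ (fun ω => (Dd ω, X ω, Y ω, Cc ω, W ω))
      = ent μ (fun ω => (X ω, Y ω, Cc ω, Dd ω, W ω)) :=
    ent_comp_inj μ (f := fun t : A × B × D × E × C => (t.2.2.2.1, t.1, t.2.1, t.2.2.1, t.2.2.2.2))
      (fun p q hpq => by
        simp only [Prod.mk.injEq] at hpq
        exact Prod.ext hpq.2.1 (Prod.ext hpq.2.2.1
          (Prod.ext hpq.2.2.2.1 (Prod.ext hpq.1 hpq.2.2.2.2))))
      (fun ω => (X ω, Y ω, Cc ω, Dd ω, W ω))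
  have t4 : ent μ (fun ω => (Dd ω, Cc ω, W ω)) = ent μ (fun ω => (Cc ω, Dd ω, W ω)) :=
    ent_comp_inj μ (f := fun t : D × E × C => (t.2.1, t.1, t.2.2))
      (fun p q hpq => by
        simp only [Prod.mk.injEq] at hpq
        exact Prod.ext hpq.2.1 (Prod.ext hpq.1 hpq.2.2))
      (fun ω => (Cc ω, Dd ω, W ω))
  have expand1 : cmi μ X Y (fun ω => (Cc ω, Dd ω, W ω))
      = ent μ (fun ω => (X ω, Cc ω, Dd ω, W ω)) + ent μ (fun ω => (Y ω, Cc ω, Dd ω, W ω))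
        - ent μ (fun ω => (X ω, Y ω, Cc ω, Dd ω, W ω)) - ent μ (fun ω => (Cc ω, Dd ω, W ω)) :=
    rfl
  have expand2 : cmi μ X Y (fun ω => (Cc ω, W ω))
      = ent μ (fun ω => (X ω, Cc ω, W ω)) + ent μ (fun ω => (Y ω, Cc ω, W ω))
        - ent μ (fun ω => (X ω, Y ω, Cc ω, W ω)) - ent μ (fun ω => (Cc ω, W ω)) := rfl
  rw [expand1, expand2, ← t1, ← t2, ← t3, ← t4, hS1, hS2]
  linarith

/-- if `D` is a.s. a function of `(C,X)` or of `(C,Y)`, then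
`I(X;Y|(C,D,W)) ≤ I(X;Y|(C,W))`: appending a public message computed by either party
cannot increase the conditional mutual information between the parties' data. -/
theorem statement8 {Ω A B C D E : Type*} [Fintype Ω] [Fintype A] [Fintype B] [Fintype C]
    [Fintype D] [Fintype E]
    (μ : Ω → ℝ) (hμ : isDist μ)
    (X : Ω → A) (Y : Ω → B) (W : Ω → C) (Cc : Ω → D) (Dd : Ω → E)
    (h : condEnt μ Dd (fun ω => (Cc ω, X ω)) = 0 ∨ condEnt μ Dd (fun ω => (Cc ω, Y ω)) = 0) :
    cmi μ X Y (fun ω => (Cc ω, Dd ω, W ω)) ≤ cmi μ X Y (fun ω => (Cc ω, W ω)) := by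
  rcases h with hX | hY
  · exact statement8_aux μ hμ X Y W Cc Dd hX
  · calc cmi μ X Y (fun ω => (Cc ω, Dd ω, W ω))
        = cmi μ Y X (fun ω => (Cc ω, Dd ω, W ω)) := cmi_comm μ X Y _
      _ ≤ cmi μ Y X (fun ω => (Cc ω, W ω)) := statement8_aux μ hμ Y X W Cc Dd hY
      _ = cmi μ X Y (fun ω => (Cc ω, W ω)) := (cmi_comm μ X Y _).symm
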